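/- Let H be a complex Hilbert space and let F ∈ B(H) be self-adjoint with ‖F‖ ≤ 1 and with 1 − F² compact. Then for every continuous function g : ℝ → ℝ with g(−1) = g(1) = 0, the operator g(F), given by continuous functional calculus, is compact. -/

import Mathlib

theorem cfc_compact_of_vanishing_at_essential_spectrum
    (H : Type*) [NormedAddCommGroup H] [InnerProductSpace ℂ H] [CompleteSpace H]
    (F : H →L[ℂ] H) (hF : IsSelfAdjoint F) (hF1 : ‖F‖ ≤ 1)
    (hFc : IsCompactOperator ((1 - F ^ 2 : H →L[ℂ] H) : H → H))
    (g : ℝ → ℝ) (hg : Continuous g) (hgm : g (-1) = 0) (hgp : g 1 = 0) :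
    IsCompactOperator ((cfc g F : H →L[ℂ] H) : H → H) := by
  cases subsingleton_or_nontrivial H with
  | inl h =>
    exact ⟨{0}, isCompact_singleton, by
      simp only [Set.preimage]
      convert Filter.univ_mem
      ext x
      simp [Subsingleton.elim ((cfc g F : H →L[ℂ] H) x) 0]⟩
  | inr h =>
    -- spectrum bound
    have hspec : spectrum ℝ F ⊆ Set.Icc (-1 : ℝ) 1 := by
      intro x hx
      have h1 : ‖x‖ ≤ ‖F‖ := spectrum.norm_le_norm_of_mem hx
      rw [Real.norm_eq_abs] at h1
      have := abs_le.mp (h1.trans hF1)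
      exact ⟨this.1, this.2⟩
    suffices hmem : cfc g F ∈ {T : H →L[ℂ] H | IsCompactOperator T} from hmem
    rw [← isClosed_setOf_isCompactOperator.closure_eq, Metric.mem_closure_iff]
    intro ε hε
    -- find δ₁, δ₂ from continuity at 1 and -1
    obtain ⟨δ₁, hδ₁pos, hδ₁⟩ := Metric.continuousAt_iff.mp (hg.continuousAt (x := 1))
      (ε / 2) (by linarith)
    obtain ⟨δ₂, hδ₂pos, hδ₂⟩ := Metric.continuousAt_iff.mp (hg.continuousAt (x := -1))
      (ε / 2) (by linarith)
    set δ : ℝ := min δ₁ δ₂ with hδdef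
    have hδpos : 0 < δ := lt_min hδ₁pos hδ₂pos
    -- the approximant
    set q : ℝ → ℝ := fun x => g x * min (1 - x ^ 2) δ / (δ * max (1 - x ^ 2) δ) with hq
    have hqc : Continuous q := by
      apply Continuous.div
      · fun_prop
      · fun_prop
      · intro x
        have : δ ≤ max (1 - x ^ 2) δ := le_max_right _ _
        positivity
    -- |g x| is small when 1 - x² < δ, for x ∈ [-1, 1]
    have hsmall : ∀ x ∈ Set.Icc (-1 : ℝ) 1, 1 - x ^ 2 < δ → |g x| ≤ ε / 2 := by
      intro x hx ht
      obtain ⟨hxl, hxr⟩ := hx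
      rcases le_or_gt 0 x with hx0 | hx0
      · have hd : dist x 1 < δ₁ := by
          rw [Real.dist_eq, abs_of_nonpos (by linarith)]
          have : x ^ 2 ≤ x := by nlinarith
          have : 1 - x < δ := by nlinarith [min_le_left δ₁ δ₂]
          linarith [min_le_left δ₁ δ₂]
        have := hδ₁ hd
        rw [hgp, dist_zero_right, Real.norm_eq_abs] at this
        linarith
      · have hd : dist x (-1) < δ₂ := by
          rw [Real.dist_eq, abs_of_nonneg (by linarith)]
          have : x ^ 2 ≤ -x := by nlinarith
          have : x + 1 < δ := by nlinarith
          calc x - -1 = x + 1 := by ring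
            _ < δ := this
            _ ≤ δ₂ := min_le_right _ _
        have := hδ₂ hd
        rw [hgm, dist_zero_right, Real.norm_eq_abs] at this
        linarith
    -- error bound on the spectrum
    have herr : ∀ x ∈ spectrum ℝ F, ‖g x - (1 - x ^ 2) * q x‖ ≤ ε / 2 := by
      intro x hx
      have hx' := hspec hx
      obtain ⟨hxl, hxr⟩ := hx'
      set t : ℝ := 1 - x ^ 2 with htdef
      have ht0 : 0 ≤ t := by nlinarith
      rcases le_or_gt δ t with hcase | hcase
      · -- t ≥ δ : error is 0
        have hmin : min t δ = δ := min_eq_right hcase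
        have hmax : max t δ = t := max_eq_left hcase
        have htne : t ≠ 0 := ne_of_gt (lt_of_lt_of_le hδpos hcase)
        simp only [hq, ← htdef, hmin, hmax]
        rw [show g x - t * (g x * δ / (δ * t)) = 0 by field_simp; ring]
        simp only [norm_zero]
        linarith
      · -- t < δ : error is g x * (1 - t²/δ²), bounded by |g x|
        have hmin : min t δ = t := min_eq_left hcase.le
        have hmax : max t δ = δ := max_eq_right hcase.le
        have hgx := hsmall x ⟨hxl, hxr⟩ hcase
        simp only [hq, ← htdef, hmin, hmax]
        rw [show g x - t * (g x * t / (δ * δ)) = g x * (1 - t * t / (δ * δ)) by ring]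
        rw [Real.norm_eq_abs, abs_mul]
        have hfac : |1 - t * t / (δ * δ)| ≤ 1 := by
          rw [abs_le]
          have h1 : t * t ≤ δ * δ := by nlinarith
          have hdd : 0 < δ * δ := by positivity
          have h2 : t * t / (δ * δ) ≤ 1 := (div_le_one hdd).mpr h1
          have h3 : 0 ≤ t * t / (δ * δ) := by positivity
          constructor <;> linarith
        calc |g x| * |1 - t * t / (δ * δ)| ≤ (ε / 2) * 1 :=
              mul_le_mul hgx hfac (abs_nonneg _) (by linarith)
          _ = ε / 2 := by ring
    -- the compact approximant
    refine ⟨(1 - F ^ 2) * cfc q F, ?_, ?_⟩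
    · -- compact
      show IsCompactOperator (((1 - F ^ 2) * cfc q F : H →L[ℂ] H) : H → H)
      exact hFc.comp_clm (cfc q F)
    · -- distance bound
      have key : cfc g F - (1 - F ^ 2) * cfc q F
          = cfc (fun x => g x - (1 - x ^ 2) * q x) F := by
        have h1 : cfc (fun x : ℝ => 1 - x ^ 2) F = 1 - F ^ 2 := by
          rw [cfc_sub (fun _ : ℝ => (1 : ℝ)) (fun x : ℝ => x ^ 2) F
              (continuousOn_const) ((continuous_pow 2).continuousOn),
            cfc_const (1 : ℝ) F hF, cfc_pow_id F 2 hF, map_one]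
        rw [cfc_sub g (fun x => (1 - x ^ 2) * q x) F (hg.continuousOn)
          (by exact (Continuous.mul (by fun_prop) hqc).continuousOn),
          cfc_mul _ _ F (by fun_prop) hqc.continuousOn, h1]
      rw [dist_eq_norm, key]
      calc ‖cfc (fun x => g x - (1 - x ^ 2) * q x) F‖ ≤ ε / 2 :=
            norm_cfc_le (by linarith) herr
        _ < ε := by linarith
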